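/- (Sufficiency direction) With the setup of the optimality characterization, if for every Hermitian Δ satisfying (C1) m_i' Δ_{k,ℓ} m_i = 0 for all i,k,ℓ and (C2) Δ ∈ S_X, we have Tr(Δ) + λ G(Δ) > 0 whenever Δ ≠ 0, where G(Δ) = ‖Δ_{Ω_X^⊥}‖₁ + Re⟨sign(X), Δ_{Ω_X}⟩, then X is the unique global minimizer of f_λ(Z) = Tr(Z) + λ‖Z‖₁ over the feasible set {Z ⪰ 0 : m_i' Z_{k,ℓ} m_i = m_i' X_{k,ℓ} m_i ∀ i,k,ℓ}. -/

import Mathlib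

open scoped ComplexOrder Matrix

/-- Complex sign: z/|z| for z ≠ 0, and 0 at 0. -/
noncomputable def csign (z : ℂ) : ℂ := if z = 0 then 0 else z / (‖z‖ : ℂ)

/-- Entrywise ℓ1 norm. -/
noncomputable def matL1 {I : Type*} [Fintype I] (M : Matrix I I ℂ) : ℝ :=
  ∑ i, ∑ j, ‖M i j‖

/-- Projection onto the support of X. -/
noncomputable def projOn {I : Type*} (X Z : Matrix I I ℂ) : Matrix I I ℂ :=
  Matrix.of fun i j => if X i j = 0 then 0 else Z i j

/-- Projection onto the off-support of X. -/
noncomputable def projOff {I : Type*} (X Z : Matrix I I ℂ) : Matrix I I ℂ :=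
  Matrix.of fun i j => if X i j = 0 then Z i j else 0

/-- G(Δ) = ‖Δ_{Ω_X^⊥}‖₁ + Re⟨sign X, Δ_{Ω_X}⟩. -/
noncomputable def Gfun {I : Type*} [Fintype I] (X Z : Matrix I I ℂ) : ℝ :=
  matL1 (projOff X Z) +
    (∑ i, ∑ j, star (csign (X i j)) * (projOn X Z) i j).re

/-- The quadratic measurement m_i' Z_{k,ℓ} m_i on the (k,ℓ) block of Z. -/
noncomputable def quadMeas {L N : ℕ}
    (Z : Matrix (Fin L × Fin N) (Fin L × Fin N) ℂ)
    (mv : Fin N → ℂ) (k l : Fin L) : ℂ :=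
  ∑ p, ∑ q, star (mv p) * Z (k, p) (l, q) * mv q

lemma key_ptwise (z X0 : ℂ) :
    ‖(if X0 = 0 then z - X0 else 0)‖
      + (star (csign X0) * (if X0 = 0 then 0 else z - X0)).re
      + ‖X0‖ ≤ ‖z‖ := by
  by_cases h : X0 = 0
  · simp [h]
  · have habs : (0:ℝ) < ‖X0‖ := norm_pos_iff.mpr h
    have hr : ‖csign X0‖ = 1 := by
      simp [csign, h, norm_div, Complex.norm_real, abs_of_pos habs,
        div_self habs.ne']
    have h1 : (star (csign X0) * z).re ≤ ‖z‖ := by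
      calc (star (csign X0) * z).re ≤ ‖star (csign X0) * z‖ :=
            Complex.re_le_norm _
        _ = ‖z‖ := by
            rw [norm_mul]
            simp [hr]
    have h2 : (star (csign X0) * X0).re = ‖X0‖ := by
      have : star (csign X0) * X0
          = ((Complex.normSq X0 / ‖X0‖ : ℝ) : ℂ) := by
        simp only [csign, if_neg h, star_div₀, Complex.star_def,
          Complex.conj_ofReal]
        rw [div_mul_eq_mul_div, ← Complex.normSq_eq_conj_mul_self,
          Complex.ofReal_div]
      rw [this, Complex.ofReal_re, Complex.normSq_eq_norm_sq, sq,
        mul_div_assoc, div_self habs.ne', mul_one]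
    simp only [h, if_neg, if_false, map_zero, norm_zero, zero_add, mul_sub,
      Complex.sub_re, h2]
    linarith

theorem stmt_10 (L N M : ℕ) (x : Fin L × Fin N → ℂ)
    (mvec : Fin M → Fin N → ℂ)
    (X : Matrix (Fin L × Fin N) (Fin L × Fin N) ℂ)
    (hX : X = Matrix.vecMulVec x (star x)) (lam : ℝ) (hlam : 0 < lam)
    (hcond : ∀ Δ : Matrix (Fin L × Fin N) (Fin L × Fin N) ℂ, Δ.IsHermitian →
      (∀ i k l, quadMeas Δ (mvec i) k l = 0) →
      (∃ c > 0, (X + ((c : ℝ) : ℂ) • Δ).PosSemidef) →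
      Δ ≠ 0 → 0 < Δ.trace.re + lam * Gfun X Δ) :
    ∀ Z : Matrix (Fin L × Fin N) (Fin L × Fin N) ℂ, Z.PosSemidef →
      (∀ i k l, quadMeas Z (mvec i) k l = quadMeas X (mvec i) k l) →
      Z ≠ X → X.trace.re + lam * matL1 X < Z.trace.re + lam * matL1 Z := by
  intro Z hZ hmeas hne
  have hXherm : X.IsHermitian := by
    rw [hX]
    ext i j
    simp [Matrix.conjTranspose_apply, Matrix.vecMulVec_apply, mul_comm]
  have hΔherm : (Z - X).IsHermitian := hZ.isHermitian.sub hXherm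
  have hmeas0 : ∀ i k l, quadMeas (Z - X) (mvec i) k l = 0 := by
    intro i k l
    have hlin : quadMeas (Z - X) (mvec i) k l
        = quadMeas Z (mvec i) k l - quadMeas X (mvec i) k l := by
      simp [quadMeas, Matrix.sub_apply, mul_sub, sub_mul,
        Finset.sum_sub_distrib]
    rw [hlin, hmeas, sub_self]
  have hS : ∃ c > 0, (X + ((c : ℝ) : ℂ) • (Z - X)).PosSemidef := by
    refine ⟨1, one_pos, ?_⟩
    have : X + ((1 : ℝ) : ℂ) • (Z - X) = Z := by
      push_cast
      rw [one_smul, add_sub_cancel]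
    rwa [this]
  have hΔne : Z - X ≠ 0 := sub_ne_zero.mpr hne
  have hkey := hcond (Z - X) hΔherm hmeas0 hS hΔne
  have htr : (Z - X).trace.re = Z.trace.re - X.trace.re := by
    simp [Matrix.trace_sub, Complex.sub_re]
  have hG : Gfun X (Z - X) + matL1 X ≤ matL1 Z := by
    unfold Gfun matL1
    simp only [Complex.re_sum, projOff, projOn, Matrix.of_apply,
      Matrix.sub_apply]
    rw [← Finset.sum_add_distrib (M := ℝ), ← Finset.sum_add_distrib (M := ℝ)]
    refine Finset.sum_le_sum fun i _ => ?_
    rw [← Finset.sum_add_distrib, ← Finset.sum_add_distrib]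
    refine Finset.sum_le_sum fun j _ => ?_
    exact key_ptwise (Z i j) (X i j)
  have hmul : lam * Gfun X (Z - X) ≤ lam * (matL1 Z - matL1 X) :=
    mul_le_mul_of_nonneg_left (by linarith) hlam.le
  rw [htr] at hkey
  nlinarith
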